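/- Let 𝓗 be a complex Hilbert space, let Pr : 𝓗 → 𝓗 be a bounded linear operator with ‖Pr‖ ≤ 1, and let U : [0, ∞) → (𝓗 → 𝓗) be a family of bounded linear operators. Suppose there are constants C > 0, D > 0, δ > 0 and h₀ > 0 such that for every h ∈ (0, h₀) there exist φ_h ∈ 𝓗 with ‖φ_h‖ = 1 and E_h ∈ ℝ satisfying ‖U(t)φ_h − e^{i t E_h} φ_h‖ ≤ C t e^{−D/h} for all t ≥ 0, and ‖Pr φ_h‖ ≥ δ. Then limsup_{t → ∞} sup_{φ ∈ 𝓗, ‖φ‖ = 1} ln(t) ‖Pr(U(t)φ)‖ ≥ D/2. -/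

import Mathlib

open Filter

/-- Abstract lower bound on the local energy decay: if `Pr` is a bounded
operator with `‖Pr‖ ≤ 1` and for each small `h` there is a unit quasimode
`φ_h` with `‖U(t)φ_h − e^{itE_h}φ_h‖ ≤ C t e^{−D/h}` and `‖Pr φ_h‖ ≥ δ`,
then `limsup_{t→∞} sup_{‖φ‖=1} ln(t)‖Pr(U(t)φ)‖ ≥ D/2`. -/
theorem stmt_19 {𝓗 : Type*} [NormedAddCommGroup 𝓗]
    [InnerProductSpace ℂ 𝓗] [CompleteSpace 𝓗]
    (Pr : 𝓗 →L[ℂ] 𝓗) (hPr : ‖Pr‖ ≤ 1)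
    (U : ℝ → (𝓗 →L[ℂ] 𝓗))
    (C D δ h₀ : ℝ) (hC : 0 < C) (hD : 0 < D) (hδ : 0 < δ) (hh₀ : 0 < h₀)
    (hyp : ∀ h : ℝ, 0 < h → h < h₀ →
      ∃ φ : 𝓗, ∃ E : ℝ, ‖φ‖ = 1 ∧
        (∀ t : ℝ, 0 ≤ t →
          ‖U t φ - Complex.exp (Complex.I * (t : ℂ) * (E : ℂ)) • φ‖
            ≤ C * t * Real.exp (-D/h)) ∧
        δ ≤ ‖Pr φ‖) :
    ((D/2 : ℝ) : EReal) ≤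
      Filter.limsup
        (fun t : ℝ =>
          ⨆ φ : {ψ : 𝓗 // ‖ψ‖ = 1},
            ((Real.log t * ‖Pr (U t φ.1)‖ : ℝ) : EReal))
        Filter.atTop := by
  apply Filter.le_limsup_of_frequently_le _ (Filter.isBounded_le_of_top)
  rw [Filter.frequently_atTop]
  intro T
  set M : ℝ := max (2*D/h₀) ((max (D/δ) (Real.log (max T 1))) - Real.log (δ/(2*C)) + 1)
    with hMdef
  have hM : 0 < M := lt_of_lt_of_le (by positivity) (le_max_left _ _)
  set h : ℝ := D / M with hhdef
  have hh1 : 0 < h := div_pos hD hM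
  have hDh : D / h = M := by
    rw [hhdef]; field_simp
  have hh2 : h < h₀ := by
    have h1 : h ≤ D / (2*D/h₀) :=
      div_le_div_of_nonneg_left hD.le (by positivity) (le_max_left _ _)
    have h2 : D / (2*D/h₀) = h₀ / 2 := by field_simp
    rw [h2] at h1
    linarith
  obtain ⟨φ, E, hφ1, hφ2, hφ3⟩ := hyp h hh1 hh2
  set t : ℝ := (δ/(2*C)) * Real.exp (D/h) with htdef
  have ht0 : 0 < t := by positivity
  have hlogt : Real.log t = Real.log (δ/(2*C)) + D/h := by
    rw [htdef, Real.log_mul (by positivity) (Real.exp_ne_zero _), Real.log_exp]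
  have hlogt' : max (D/δ) (Real.log (max T 1)) + 1 ≤ Real.log t := by
    rw [hlogt, hDh]
    have := le_max_right (2*D/h₀)
      ((max (D/δ) (Real.log (max T 1))) - Real.log (δ/(2*C)) + 1)
    linarith
  have hlogδ : D/δ ≤ Real.log t := by
    have := le_max_left (D/δ) (Real.log (max T 1)); linarith
  have hTt : T ≤ t := by
    have h1 : Real.log (max T 1) ≤ Real.log t := by
      have := le_max_right (D/δ) (Real.log (max T 1)); linarith
    have h2 : (max T 1 : ℝ) ≤ t := by
      have := Real.exp_le_exp.mpr h1
      rwa [Real.exp_log (by positivity), Real.exp_log ht0] at this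
    exact le_trans (le_max_left _ _) h2
  -- norm of the phase is 1
  have hexp : ‖Complex.exp (Complex.I * (t : ℂ) * (E : ℂ))‖ = 1 := by
    rw [Complex.norm_exp]
    simp [Complex.mul_re]
  -- key lower bound on ‖Pr (U t φ)‖
  have herr : ‖Pr (U t φ) - Pr (Complex.exp (Complex.I * (t : ℂ) * (E : ℂ)) • φ)‖
      ≤ δ/2 := by
    rw [← map_sub]
    have h1 : ‖Pr (U t φ - Complex.exp (Complex.I * (t : ℂ) * (E : ℂ)) • φ)‖
        ≤ ‖Pr‖ * ‖U t φ - Complex.exp (Complex.I * (t : ℂ) * (E : ℂ)) • φ‖ :=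
      Pr.le_opNorm _
    have h2 := hφ2 t ht0.le
    have h3 : C * t * Real.exp (-D/h) = δ/2 := by
      rw [htdef, neg_div, Real.exp_neg]
      field_simp
    nlinarith [norm_nonneg (U t φ - Complex.exp (Complex.I * (t : ℂ) * (E : ℂ)) • φ)]
  have hPrφ : ‖Pr (Complex.exp (Complex.I * (t : ℂ) * (E : ℂ)) • φ)‖ = ‖Pr φ‖ := by
    rw [map_smul, norm_smul, hexp, one_mul]
  have key : δ/2 ≤ ‖Pr (U t φ)‖ := by
    have h4 := norm_sub_norm_le (Pr (Complex.exp (Complex.I * (t : ℂ) * (E : ℂ)) • φ))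
      (Pr (U t φ))
    rw [norm_sub_rev] at h4
    linarith
  refine ⟨t, hTt, ?_⟩
  have hbound : (D/2 : ℝ) ≤ Real.log t * ‖Pr (U t φ)‖ := by
    have h5 : (D/δ) * (δ/2) ≤ Real.log t * ‖Pr (U t φ)‖ := by
      exact mul_le_mul hlogδ key (by positivity)
        (le_trans (le_of_lt (div_pos hD hδ)) hlogδ)
    have h6 : (D/δ) * (δ/2) = D/2 := by field_simp
    linarith
  exact le_trans (EReal.coe_le_coe_iff.mpr hbound)
    (le_iSup (fun φ' : {ψ : 𝓗 // ‖ψ‖ = 1} =>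
      ((Real.log t * ‖Pr (U t φ'.1)‖ : ℝ) : EReal)) ⟨φ, hφ1⟩)
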